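/- There exists a convex function f : [−1,1] → ℝ, differentiable with f(0) = 0, f'(0) = 0, satisfying |f'(x)| ≤ |x| for all x (so the unit circle centered at (0,1) supports its graph from above at the origin, and K(f,0) < ∞), but such that f' is not Lipschitz on any neighborhood of 0. -/

import Mathlib

open Filter Metric Set
open scoped Topology

noncomputable section NonLip

/-- heights -/
def cc (n : ℕ) : ℝ := (1/2)^(n+2)
/-- slopes -/
def ss (n : ℕ) : ℝ := 4^(n+2)
/-- ramp widths -/
def dd (n : ℕ) : ℝ := cc n / ss n
/-- ramp at `(1/2)^n` -/
def rr (n : ℕ) (x : ℝ) : ℝ := max 0 (min (cc n) (ss n * (x - (1/2)^n) + cc n))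

def gg (x : ℝ) : ℝ := ∑' n, (rr n x - rr n (-x))

def ff (x : ℝ) : ℝ := ∫ t in (0:ℝ)..x, gg t

lemma cc_pos (n : ℕ) : 0 < cc n := by unfold cc; positivity
lemma ss_pos (n : ℕ) : 0 < ss n := by unfold ss; positivity
lemma dd_pos (n : ℕ) : 0 < dd n := div_pos (cc_pos n) (ss_pos n)
lemma ss_mul_dd (n : ℕ) : ss n * dd n = cc n := by
  rw [dd, mul_div_cancel₀ _ (ss_pos n).ne']
lemma dd_le_cc (n : ℕ) : dd n ≤ cc n :=
  div_le_self (cc_pos n).le (one_le_pow₀ (by norm_num))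

lemma rr_nonneg (n : ℕ) (x : ℝ) : 0 ≤ rr n x := le_max_left _ _
lemma rr_le (n : ℕ) (x : ℝ) : rr n x ≤ cc n :=
  max_le (cc_pos n).le (min_le_left _ _)

lemma rr_mono (n : ℕ) : Monotone (rr n) := by
  intro x y h
  refine max_le_max le_rfl (min_le_min le_rfl ?_)
  have := (ss_pos n).le
  nlinarith

lemma rr_cont (n : ℕ) : Continuous (rr n) := by
  apply continuous_const.max
  exact continuous_const.min (by continuity)

lemma rr_eq_zero {n : ℕ} {x : ℝ} (h : x ≤ (1/2)^n - dd n) : rr n x = 0 := by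
  have h1 : ss n * (x - (1/2)^n) + cc n ≤ 0 := by
    have := ss_mul_dd n
    have h2 : ss n * (x - (1/2)^n) ≤ ss n * (-dd n) := by
      apply mul_le_mul_of_nonneg_left (by linarith) (ss_pos n).le
    nlinarith
  have : min (cc n) (ss n * (x - (1/2)^n) + cc n) ≤ 0 :=
    le_trans (min_le_right _ _) h1
  rw [rr, max_eq_left this]

lemma rr_eq_cc {n : ℕ} {x : ℝ} (h : (1/2)^n ≤ x) : rr n x = cc n := by
  have h1 : cc n ≤ ss n * (x - (1/2)^n) + cc n := by
    nlinarith [ss_pos n, (ss_pos n).le]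
  rw [rr, min_eq_left h1, max_eq_right (cc_pos n).le]

lemma dd_le_half_pow (n : ℕ) : dd n ≤ (1/2)^(n+1) := by
  refine (dd_le_cc n).trans ?_
  rw [cc]
  apply pow_le_pow_of_le_one (by norm_num) (by norm_num)
  omega

lemma rr_neg_eq_zero (n : ℕ) {x : ℝ} (hx : 0 ≤ x) : rr n (-x) = 0 := by
  apply rr_eq_zero
  have h1 : dd n ≤ (1/2)^(n+1) := dd_le_half_pow n
  have h2 : (1/2:ℝ)^(n+1) ≤ (1/2)^n :=
    pow_le_pow_of_le_one (by norm_num) (by norm_num) (n.le_succ)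
  linarith

lemma summable_cc : Summable cc := by
  have h : Summable (fun n : ℕ => (1/2:ℝ)^n) :=
    summable_geometric_of_lt_one (by norm_num) (by norm_num)
  have := h.mul_right ((1/2:ℝ)^2)
  refine this.congr fun n => ?_
  rw [cc, pow_add]

lemma summable_t (x : ℝ) : Summable (fun n => rr n x - rr n (-x)) := by
  refine Summable.of_norm_bounded summable_cc fun n => ?_
  rw [Real.norm_eq_abs, abs_le]
  constructor
  · have := rr_le n (-x); have := rr_nonneg n x; linarith
  · have := rr_le n x; have := rr_nonneg n (-x); linarith

lemma summable_rr (x : ℝ) : Summable (fun n => rr n x) := by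
  refine Summable.of_norm_bounded summable_cc fun n => ?_
  rw [Real.norm_eq_abs, abs_of_nonneg (rr_nonneg n x)]
  exact rr_le n x

lemma gg_cont : Continuous gg := by
  refine continuous_tsum (fun n => ((rr_cont n).sub ((rr_cont n).comp continuous_neg)))
    summable_cc fun n x => ?_
  rw [Real.norm_eq_abs, abs_le]
  constructor
  · have := rr_le n (-x); have := rr_nonneg n x; linarith
  · have := rr_le n x; have := rr_nonneg n (-x); linarith

lemma gg_mono : Monotone gg := by
  intro x y h
  exact Summable.tsum_le_tsum
    (fun n => sub_le_sub (rr_mono n h) (rr_mono n (neg_le_neg h)))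
    (summable_t x) (summable_t y)

lemma gg_of_nonneg {x : ℝ} (hx : 0 ≤ x) : gg x = ∑' n, rr n x :=
  tsum_congr fun n => by rw [rr_neg_eq_zero n hx, sub_zero]

lemma gg_zero : gg 0 = 0 := by
  rw [gg]
  simp

lemma gg_neg (x : ℝ) : gg (-x) = - gg x := by
  rw [gg, gg, ← tsum_neg]
  exact tsum_congr fun n => by rw [neg_neg]; ring

lemma ff_hasDeriv (x : ℝ) : HasDerivAt ff (gg x) x := by
  apply intervalIntegral.integral_hasDerivAt_right
    (gg_cont.intervalIntegrable _ _)
    gg_cont.aestronglyMeasurable.stronglyMeasurableAtFilter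
    gg_cont.continuousAt

lemma ff_deriv : deriv ff = gg := funext fun x => (ff_hasDeriv x).deriv

lemma gg_nonneg {x : ℝ} (hx : 0 ≤ x) : 0 ≤ gg x := by
  rw [gg_of_nonneg hx]
  exact tsum_nonneg fun n => rr_nonneg n x

lemma gg_le_self {x : ℝ} (hx : 0 ≤ x) : gg x ≤ x := by
  classical
  rcases eq_or_lt_of_le hx with h | h
  · rw [← h, gg_zero]
  have hP : ∃ n, (1/2:ℝ)^(n+1) ≤ x := by
    obtain ⟨n, hn⟩ := exists_pow_lt_of_lt_one h (by norm_num : (1/2:ℝ) < 1)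
    exact ⟨n, le_of_lt (lt_of_le_of_lt
      (pow_le_pow_of_le_one (by norm_num) (by norm_num) (n.le_succ)) hn)⟩
  obtain ⟨N, hN, hlt⟩ : ∃ N : ℕ, (1/2:ℝ)^(N+1) ≤ x ∧ ∀ i < N, x < (1/2:ℝ)^(i+1) :=
    ⟨Nat.find hP, Nat.find_spec hP, fun i hi => lt_of_not_ge (Nat.find_min hP hi)⟩
  rw [gg_of_nonneg hx]
  rw [← (summable_rr x).sum_add_tsum_nat_add N]
  have h1 : ∑ i ∈ Finset.range N, rr i x = 0 := by
    apply Finset.sum_eq_zero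
    intro i hi
    apply rr_eq_zero
    have h2 := hlt i (Finset.mem_range.mp hi)
    have h3 : dd i ≤ (1/2:ℝ)^(i+1) := dd_le_half_pow i
    have h4 : (1/2:ℝ)^i = 2 * (1/2)^(i+1) := by ring
    linarith
  rw [h1, zero_add]
  have h5 : ∑' n, rr (n + N) x ≤ ∑' n : ℕ, (1/2:ℝ)^(n + N + 2) := by
    refine Summable.tsum_le_tsum (fun n => rr_le _ _) ((summable_nat_add_iff N).mpr (summable_rr x)) ?_
    exact Summable.congr ((summable_nat_add_iff N).mpr summable_cc) fun n => rfl
  refine h5.trans ?_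
  have h6 : ∑' n : ℕ, (1/2:ℝ)^(n + N + 2) = (1/2:ℝ)^(N+1) := by
    have hc : ∀ n : ℕ, (1/2:ℝ)^(n + N + 2) = (1/2)^n * (1/2)^(N+2) := by
      intro n; rw [← pow_add, add_assoc]
    rw [tsum_congr hc, tsum_mul_right, tsum_geometric_of_lt_one (by norm_num) (by norm_num)]
    ring
  rw [h6]; exact hN

lemma gg_abs_le {x : ℝ} (hx : x ∈ Set.Icc (-1:ℝ) 1) : |gg x| ≤ |x| := by
  rcases le_total 0 x with h | h
  · rw [abs_of_nonneg (gg_nonneg h), abs_of_nonneg h]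
    exact gg_le_self h
  · have h1 : 0 ≤ -x := by linarith
    have h2 : gg x ≤ 0 := by
      have := gg_nonneg h1
      rw [gg_neg] at this
      linarith
    rw [abs_of_nonpos h2, abs_of_nonpos h, ← gg_neg]
    exact gg_le_self h1

end NonLip

theorem stmt15 :
    ∃ f : ℝ → ℝ,
      ConvexOn ℝ (Set.Icc (-1 : ℝ) 1) f ∧
      (∀ x ∈ Set.Icc (-1 : ℝ) 1, DifferentiableAt ℝ f x) ∧
      f 0 = 0 ∧ deriv f 0 = 0 ∧
      (∀ x ∈ Set.Icc (-1 : ℝ) 1, |deriv f x| ≤ |x|) ∧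
      (∀ ε > (0 : ℝ), ∀ L : NNReal,
        ¬ LipschitzOnWith L (deriv f) (Set.Icc (-1 : ℝ) 1 ∩ Metric.ball 0 ε)) := by
  have hdiff : Differentiable ℝ ff := fun x => (ff_hasDeriv x).differentiableAt
  refine ⟨ff, ?_, fun x _ => hdiff x, ?_, ?_, ?_, ?_⟩
  · refine (Monotone.convexOn_univ_of_deriv hdiff ?_).subset (Set.subset_univ _)
      (convex_Icc _ _)
    rw [ff_deriv]; exact gg_mono
  · simp [ff, intervalIntegral.integral_same]
  · rw [ff_deriv]; exact gg_zero
  · intro x hx; rw [ff_deriv]; exact gg_abs_le hx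
  · intro ε hε L h
    rw [ff_deriv] at h
    obtain ⟨n1, hn1⟩ := exists_pow_lt_of_lt_one hε (by norm_num : (1/2:ℝ) < 1)
    obtain ⟨n2, hn2⟩ := pow_unbounded_of_one_lt (L:ℝ) (by norm_num : (1:ℝ) < 4)
    set n := max n1 n2 with hn
    have hb1 : (1/2:ℝ)^n < ε :=
      lt_of_le_of_lt (pow_le_pow_of_le_one (by norm_num) (by norm_num) (le_max_left _ _)) hn1
    have hL : (L:ℝ) < ss n := by
      refine hn2.trans_le ?_
      rw [ss]
      exact pow_le_pow_right₀ (by norm_num) (by omega)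
    set y := ((1:ℝ)/2)^n with hy
    set x := y - dd n with hxdef
    have hy_pos : 0 < y := by positivity
    have hy_le : y ≤ 1 := pow_le_one₀ (by norm_num) (by norm_num)
    have hx_nonneg : 0 ≤ x := by
      have h1 := dd_le_half_pow n
      have h2 : (1/2:ℝ)^(n+1) ≤ (1/2)^n :=
        pow_le_pow_of_le_one (by norm_num) (by norm_num) (n.le_succ)
      simp only [hxdef, hy]
      linarith
    have hxy : x ≤ y := by simp [hxdef]; exact (dd_pos n).le
    have hyS : y ∈ Set.Icc (-1:ℝ) 1 ∩ Metric.ball 0 ε := by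
      constructor
      · exact ⟨by linarith, hy_le⟩
      · rw [Metric.mem_ball, Real.dist_eq, sub_zero, abs_of_pos hy_pos]; exact hb1
    have hxS : x ∈ Set.Icc (-1:ℝ) 1 ∩ Metric.ball 0 ε := by
      constructor
      · exact ⟨by linarith, by linarith⟩
      · rw [Metric.mem_ball, Real.dist_eq, sub_zero, abs_of_nonneg hx_nonneg]
        linarith
    have hdist := (lipschitzOnWith_iff_dist_le_mul.mp h) y hyS x hxS
    rw [Real.dist_eq, Real.dist_eq] at hdist
    have hterm : cc n ≤ gg y - gg x := by
      have heq : gg y - gg x = ∑' m, ((rr m y - rr m (-y)) - (rr m x - rr m (-x))) := by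
        rw [gg, gg, ← Summable.tsum_sub (summable_t y) (summable_t x)]
      rw [heq]
      have hkey : ((rr n y - rr n (-y)) - (rr n x - rr n (-x))) = cc n := by
        rw [rr_neg_eq_zero n hy_pos.le, rr_neg_eq_zero n hx_nonneg,
          rr_eq_cc (le_of_eq hy.symm), rr_eq_zero (le_of_eq (by rw [hxdef, hy]))]
        ring
      calc cc n = ((rr n y - rr n (-y)) - (rr n x - rr n (-x))) := hkey.symm
        _ ≤ ∑' m, ((rr m y - rr m (-y)) - (rr m x - rr m (-x))) := by
            refine Summable.le_tsum ((summable_t y).sub (summable_t x)) n fun m _ => ?_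
            have := rr_mono m hxy
            have := rr_mono m (neg_le_neg hxy)
            linarith
    have habs : cc n ≤ |gg y - gg x| := hterm.trans (le_abs_self _)
    have hyx : |y - x| = dd n := by
      simp only [hxdef]
      rw [sub_sub_cancel, abs_of_pos (dd_pos n)]
    rw [hyx] at hdist
    have hfinal : (L:ℝ) * dd n < cc n := by
      calc (L:ℝ) * dd n < ss n * dd n :=
            mul_lt_mul_of_pos_right hL (dd_pos n)
        _ = cc n := ss_mul_dd n
    linarith [habs.trans hdist]
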